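/- arXiv:2506.24080 — 3 statements merged into one kernel-verified Lean document; each statement's English description precedes it below -/
import Mathlib

section
/- The wheel graphs satisfy η(W_3) = 3, η(W_6) = 5, and η(W_8) = 5. -/
open SimpleGraph

variable {V : Type*}

/-- Two vertices have isomorphic labeled links: an equivalence of neighborhoods preserving
adjacency and edge labels. -/
def LabeledLinkIso (G : SimpleGraph V) (ℓ : Sym2 V → ℕ+) (u v : V) : Prop :=
  ∃ e : (G.neighborSet u) ≃ (G.neighborSet v),
    (∀ a b : G.neighborSet u, G.Adj a.1 b.1 ↔ G.Adj (e a).1 (e b).1) ∧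
    (∀ a b : G.neighborSet u, G.Adj a.1 b.1 → ℓ s(a.1, b.1) = ℓ s((e a).1, (e b).1))

/-- An edge labeling is link-irregular if distinct vertices have non-isomorphic labeled links. -/
def IsLinkIrregular (G : SimpleGraph V) (ℓ : Sym2 V → ℕ+) : Prop :=
  ∀ u v : V, u ≠ v → ¬ LabeledLinkIso G ℓ u v

/-- A graph admits a link-irregular labeling. -/
def HasLinkIrregularLabeling (G : SimpleGraph V) : Prop :=
  ∃ ℓ : Sym2 V → ℕ+, IsLinkIrregular G ℓ

/-- The link-irregular labeling number η(G): the minimum number of distinct labels used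
on the edges of G over all link-irregular labelings, or ∞ if none exists. -/
noncomputable def linkIrregularNumber (G : SimpleGraph V) : ℕ∞ :=
  sInf {c : ℕ∞ | ∃ ℓ : Sym2 V → ℕ+, IsLinkIrregular G ℓ ∧ c = ((ℓ '' G.edgeSet).ncard : ℕ∞)}

/-- The edge set of the link of x, viewed as a set of edges of G. -/
def linkEdgeSet (G : SimpleGraph V) (x : V) : Set (Sym2 V) :=
  {e | e ∈ G.edgeSet ∧ ∀ v ∈ e, v ∈ G.neighborSet x}

/-- Active neighborhood. -/
def activeNeighborSet (G : SimpleGraph V) (x : V) : Set V :=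
  {u ∈ G.neighborSet x | ∃ w ∈ G.neighborSet x, G.Adj u w}

/-- A graph is cut-irregular if distinct vertex-deleted subgraphs are non-isomorphic. -/
def CutIrregular (H : SimpleGraph V) : Prop :=
  ∀ u v : V, u ≠ v → ¬ Nonempty ((H.induce ({u} : Set V)ᶜ) ≃g (H.induce ({v} : Set V)ᶜ))

/-- The wheel graph W_n: a cycle C_n together with a universal vertex. -/
def wheelGraph (n : ℕ) : SimpleGraph (Option (Fin n)) where
  Adj x y :=
    match x, y with
    | none, none => False
    | none, some _ => True
    | some _, none => True
    | some i, some j => (cycleGraph n).Adj i j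
  symm := by
    constructor
    rintro (_|i) (_|j) h
    · exact h
    · trivial
    · trivial
    · exact (cycleGraph n).adj_symm h
  loopless := by
    constructor
    rintro (_|i) h
    · exact h
    · exact (cycleGraph n).irrefl h

/-- The join of two graphs. -/
def graphJoin {W : Type*} (G : SimpleGraph V) (H : SimpleGraph W) : SimpleGraph (V ⊕ W) where
  Adj x y :=
    match x, y with
    | Sum.inl a, Sum.inl b => G.Adj a b
    | Sum.inr a, Sum.inr b => H.Adj a b
    | _, _ => True
  symm := by
    constructor
    rintro (a|a) (b|b) h
    · exact G.adj_symm h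
    · trivial
    · trivial
    · exact H.adj_symm h
  loopless := by
    constructor
    rintro (a|a) h
    · exact G.irrefl h
    · exact H.irrefl h

/-- The hypercube graph Q_n. -/
def hypercubeGraph (n : ℕ) : SimpleGraph (Fin n → Bool) where
  Adj x y := (Finset.univ.filter fun i => x i ≠ y i).card = 1
  symm := by
    constructor
    intro x y h
    have : (Finset.univ.filter fun i => y i ≠ x i) = (Finset.univ.filter fun i => x i ≠ y i) := by
      apply Finset.filter_congr
      intro i _
      simp [ne_comm]
    rw [this]
    exact h
  loopless := by
    constructor
    intro x h
    simp at h

section Core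
variable {n : ℕ} [NeZero n]
open Fin.CommRing

lemma wheel_adj_none_some (i : Fin n) : (wheelGraph n).Adj none (some i) := trivial
lemma wheel_adj_some_some {i j : Fin n} :
    (wheelGraph n).Adj (some i) (some j) ↔ (cycleGraph n).Adj i j := Iff.rfl

lemma val_one_eq (hv : (1 : Fin n).val = 1) {x : Fin n} (h : x.val = 1) : x = 1 :=
  Fin.ext (by rw [hv, h])

lemma cyc_adj_iff (hv : (1 : Fin n).val = 1) {i k : Fin n} :
    (cycleGraph n).Adj i k ↔ k = i - 1 ∨ k = i + 1 := by
  rw [cycleGraph_adj']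
  constructor
  · rintro (h | h)
    · left
      have h1 : i - k = 1 := val_one_eq hv h
      have : i - (i - k) = k := by ring
      rw [h1] at this; exact this.symm
    · right
      have h1 : k - i = 1 := val_one_eq hv h
      have : i + (k - i) = k := by ring
      rw [h1] at this; exact this.symm
  · rintro (rfl | rfl)
    · left; rw [show i - (i - 1) = 1 by ring, hv]
    · right; rw [show i + 1 - i = 1 by ring, hv]

lemma mem_wheel_nbhd (hv : (1 : Fin n).val = 1) {i : Fin n} {x : Option (Fin n)} :
    x ∈ (wheelGraph n).neighborSet (some i) ↔
      x = none ∨ x = some (i - 1) ∨ x = some (i + 1) := by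
  cases x with
  | none => simp [neighborSet]; exact wheel_adj_none_some i |>.symm
  | some k =>
      simp only [mem_neighborSet, wheel_adj_some_some, cyc_adj_iff hv,
        Option.some.injEq, reduceCtorEq, false_or]

lemma not_cyc_adj_pm (hv : (1 : Fin n).val = 1) (h2 : ((2:Fin n)).val ≠ 1)
    (h2' : ((-2:Fin n)).val ≠ 1) (i : Fin n) :
    ¬ (cycleGraph n).Adj (i - 1) (i + 1) := by
  rw [cycleGraph_adj']
  rintro (h | h)
  · rw [show i - 1 - (i + 1) = -2 by ring] at h; exact h2' h
  · rw [show i + 1 - (i - 1) = 2 by ring] at h; exact h2 h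

lemma pm_ne (h20 : (2:Fin n) ≠ 0) (i : Fin n) : i + 1 ≠ i - 1 := by
  intro h
  apply h20
  have : (i + 1) - (i - 1) = 2 := by ring
  rw [h, sub_self] at this; exact this.symm

def pmap (a : Fin n) (b₁ b₂ : Fin n) : Option (Fin n) → Option (Fin n)
  | none => none
  | some k => if k = a then some b₁ else some b₂

lemma rim_iso (hv : (1 : Fin n).val = 1) (h2 : ((2:Fin n)).val ≠ 1)
    (h2' : ((-2:Fin n)).val ≠ 1) (h20 : (2:Fin n) ≠ 0)
    (ℓ : Sym2 (Option (Fin n)) → ℕ+) (i j : Fin n) (c₁ c₂ : Fin n)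
    (hc : (c₁ = j - 1 ∧ c₂ = j + 1) ∨ (c₁ = j + 1 ∧ c₂ = j - 1))
    (e1 : ℓ s(none, some (i-1)) = ℓ s(none, some c₁))
    (e2 : ℓ s(none, some (i+1)) = ℓ s(none, some c₂)) :
    LabeledLinkIso (wheelGraph n) ℓ (some i) (some j) := by
  have hpm : ∀ k : Fin n, k + 1 ≠ k - 1 := pm_ne h20
  have hcc : c₂ ≠ c₁ := by
    rcases hc with ⟨rfl, rfl⟩ | ⟨rfl, rfl⟩
    · exact hpm j
    · exact (hpm j).symm
  have hnadjc : ¬ (cycleGraph n).Adj c₁ c₂ := by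
    rcases hc with ⟨rfl, rfl⟩ | ⟨rfl, rfl⟩
    · exact not_cyc_adj_pm hv h2 h2' j
    · exact fun h => not_cyc_adj_pm hv h2 h2' j h.symm
  have mem_i : ∀ x : Option (Fin n), x ∈ (wheelGraph n).neighborSet (some i) ↔
      x = none ∨ x = some (i - 1) ∨ x = some (i + 1) := fun x => mem_wheel_nbhd hv
  have mem_j : ∀ x : Option (Fin n), x ∈ (wheelGraph n).neighborSet (some j) ↔
      x = none ∨ x = some c₁ ∨ x = some c₂ := by
    intro x
    rw [mem_wheel_nbhd hv]
    rcases hc with ⟨rfl, rfl⟩ | ⟨rfl, rfl⟩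
    · rfl
    · tauto
  -- computation lemmas
  have p0 : ∀ a b₁ b₂ : Fin n, pmap a b₁ b₂ none = none := fun _ _ _ => rfl
  have p1 : pmap (i-1) c₁ c₂ (some (i-1)) = some c₁ := by simp [pmap]
  have p2 : pmap (i-1) c₁ c₂ (some (i+1)) = some c₂ := by simp [pmap, hpm i]
  have q1 : pmap c₁ (i-1) (i+1) (some c₁) = some (i-1) := by simp [pmap]
  have q2 : pmap c₁ (i-1) (i+1) (some c₂) = some (i+1) := by simp [pmap, hcc]
  refine ⟨⟨fun x => ⟨pmap (i-1) c₁ c₂ x.1, ?_⟩, fun y => ⟨pmap c₁ (i-1) (i+1) y.1, ?_⟩,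
      ?_, ?_⟩, ?_, ?_⟩
  · rcases (mem_i x.1).1 x.2 with h | h | h <;> rw [h] <;> rw [mem_j]
    · exact Or.inl rfl
    · rw [p1]; exact Or.inr (Or.inl rfl)
    · rw [p2]; exact Or.inr (Or.inr rfl)
  · rcases (mem_j y.1).1 y.2 with h | h | h <;> rw [h] <;> rw [mem_i]
    · exact Or.inl rfl
    · rw [q1]; exact Or.inr (Or.inl rfl)
    · rw [q2]; exact Or.inr (Or.inr rfl)
  · intro x
    apply Subtype.ext
    show pmap c₁ (i-1) (i+1) (pmap (i-1) c₁ c₂ x.1) = x.1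
    rcases (mem_i x.1).1 x.2 with h | h | h <;> rw [h]
    · rfl
    · rw [p1, q1]
    · rw [p2, q2]
  · intro y
    apply Subtype.ext
    show pmap (i-1) c₁ c₂ (pmap c₁ (i-1) (i+1) y.1) = y.1
    rcases (mem_j y.1).1 y.2 with h | h | h <;> rw [h]
    · rfl
    · rw [q1, p1]
    · rw [q2, p2]
  · intro a b
    show (wheelGraph n).Adj a.1 b.1 ↔ (wheelGraph n).Adj (pmap (i-1) c₁ c₂ a.1) (pmap (i-1) c₁ c₂ b.1)
    rcases (mem_i a.1).1 a.2 with ha | ha | ha <;> rcases (mem_i b.1).1 b.2 with hb | hb | hb <;>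
        rw [ha, hb] <;> simp only [p0, p1, p2] <;>
      first
        | exact Iff.rfl
        | exact iff_of_true trivial trivial
        | exact iff_of_false (fun h => (wheelGraph n).irrefl h)
            (fun h => (wheelGraph n).irrefl h)
        | exact iff_of_false (fun h => not_cyc_adj_pm hv h2 h2' i h) (fun h => hnadjc h)
        | exact iff_of_false (fun h => not_cyc_adj_pm hv h2 h2' i (Adj.symm h))
            (fun h => hnadjc (Adj.symm h))
  · intro a b hab
    show ℓ s(a.1, b.1) = ℓ s(pmap (i-1) c₁ c₂ a.1, pmap (i-1) c₁ c₂ b.1)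
    rcases (mem_i a.1).1 a.2 with ha | ha | ha <;> rcases (mem_i b.1).1 b.2 with hb | hb | hb <;>
        rw [ha, hb] at hab ⊢ <;> simp only [p0, p1, p2] <;>
      first
        | exact absurd hab (wheelGraph n).irrefl
        | exact absurd hab (fun h => not_cyc_adj_pm hv h2 h2' i h)
        | exact absurd hab (fun h => not_cyc_adj_pm hv h2 h2' i (Adj.symm h))
        | exact e1
        | exact e2
        | (rw [show s(some (i-1), (none : Option (Fin n))) = s(none, some (i-1)) from Sym2.eq_swap,
            show s(some c₁, (none : Option (Fin n))) = s(none, some c₁) from Sym2.eq_swap];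
           exact e1)
        | (rw [show s(some (i+1), (none : Option (Fin n))) = s(none, some (i+1)) from Sym2.eq_swap,
            show s(some c₂, (none : Option (Fin n))) = s(none, some c₂) from Sym2.eq_swap];
           exact e2)
end Core

section Pcond

def pcond {n k : ℕ} [NeZero n] (t : Fin n → Fin k) : Prop :=
  ∃ i j : Fin n, i ≠ j ∧ ((t (i-1) = t (j-1) ∧ t (i+1) = t (j+1)) ∨
    (t (i-1) = t (j+1) ∧ t (i+1) = t (j-1)))

instance {n k : ℕ} [NeZero n] (t : Fin n → Fin k) : Decidable (pcond t) := by
  unfold pcond; infer_instance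

lemma pcond_comp {n k : ℕ} [NeZero n] (σ : Fin k ≃ Fin k) (t : Fin n → Fin k)
    (h : pcond (fun x => σ (t x))) : pcond t := by
  obtain ⟨i, j, hij, hc⟩ := h
  refine ⟨i, j, hij, ?_⟩
  rcases hc with ⟨h1, h2⟩ | ⟨h1, h2⟩
  · exact Or.inl ⟨σ.injective h1, σ.injective h2⟩
  · exact Or.inr ⟨σ.injective h1, σ.injective h2⟩

lemma pcond_all {n k : ℕ} [NeZero n] [NeZero k] (h01 : (0 : Fin k) ≠ 1)
    (H : ∀ t : Fin n → Fin k, t 0 = 0 → (t 1 = 0 ∨ t 1 = 1) → pcond t) :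
    ∀ t : Fin n → Fin k, pcond t := by
  intro t
  set σ := Equiv.swap (t 0) 0 with hσ
  have hs0 : σ (t 0) = 0 := Equiv.swap_apply_left _ _
  by_cases h1 : σ (t 1) = 0 ∨ σ (t 1) = 1
  · exact pcond_comp σ t (H _ hs0 h1)
  · push_neg at h1
    set τ := Equiv.swap (σ (t 1)) 1 with hτ
    have ht0 : τ (σ (t 0)) = 0 := by
      rw [hs0]
      exact Equiv.swap_apply_of_ne_of_ne (Ne.symm h1.1) h01
    have ht1 : τ (σ (t 1)) = 1 := Equiv.swap_apply_left _ _
    refine pcond_comp σ t (pcond_comp τ (fun x => σ (t x)) (H _ ht0 (Or.inr ht1)))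

end Pcond

def eqb {k : ℕ} (x y z w : Fin k) : Bool := (x == z && y == w) || (x == w && y == z)

def chk6 (a0 a1 a2 a3 a4 a5 : Fin 4) : Bool :=
    eqb a5 a1 a0 a2 ||
    eqb a5 a1 a1 a3 ||
    eqb a5 a1 a2 a4 ||
    eqb a5 a1 a3 a5 ||
    eqb a5 a1 a4 a0 ||
    eqb a0 a2 a1 a3 ||
    eqb a0 a2 a2 a4 ||
    eqb a0 a2 a3 a5 ||
    eqb a0 a2 a4 a0 ||
    eqb a1 a3 a2 a4 ||
    eqb a1 a3 a3 a5 ||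
    eqb a1 a3 a4 a0 ||
    eqb a2 a4 a3 a5 ||
    eqb a2 a4 a4 a0 ||
    eqb a3 a5 a4 a0

def chk8 (a0 a1 a2 a3 a4 a5 a6 a7 : Fin 4) : Bool :=
    eqb a7 a1 a0 a2 ||
    eqb a7 a1 a1 a3 ||
    eqb a7 a1 a2 a4 ||
    eqb a7 a1 a3 a5 ||
    eqb a7 a1 a4 a6 ||
    eqb a7 a1 a5 a7 ||
    eqb a7 a1 a6 a0 ||
    eqb a0 a2 a1 a3 ||
    eqb a0 a2 a2 a4 ||
    eqb a0 a2 a3 a5 ||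
    eqb a0 a2 a4 a6 ||
    eqb a0 a2 a5 a7 ||
    eqb a0 a2 a6 a0 ||
    eqb a1 a3 a2 a4 ||
    eqb a1 a3 a3 a5 ||
    eqb a1 a3 a4 a6 ||
    eqb a1 a3 a5 a7 ||
    eqb a1 a3 a6 a0 ||
    eqb a2 a4 a3 a5 ||
    eqb a2 a4 a4 a6 ||
    eqb a2 a4 a5 a7 ||
    eqb a2 a4 a6 a0 ||
    eqb a3 a5 a4 a6 ||
    eqb a3 a5 a5 a7 ||
    eqb a3 a5 a6 a0 ||
    eqb a4 a6 a5 a7 ||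
    eqb a4 a6 a6 a0 ||
    eqb a5 a7 a6 a0

set_option maxRecDepth 40000 in
set_option maxHeartbeats 16000000 in
theorem A6coreB : ∀ a2 a3 a4 a5 : Fin 4,
    chk6 0 0 a2 a3 a4 a5 = true ∧ chk6 0 1 a2 a3 a4 a5 = true := by decide

set_option maxRecDepth 40000 in
set_option maxHeartbeats 64000000 in
theorem A8coreB : ∀ a2 a3 a4 a5 a6 a7 : Fin 4,
    chk8 0 0 a2 a3 a4 a5 a6 a7 = true ∧ chk8 0 1 a2 a3 a4 a5 a6 a7 = true := by decide

lemma eqb_eq {k : ℕ} {x y z w : Fin k} (h : eqb x y z w = true) :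
    (x = z ∧ y = w) ∨ (x = w ∧ y = z) := by
  simpa [eqb, Bool.or_eq_true, Bool.and_eq_true, beq_iff_eq] using h

lemma chk6_pcond (t : Fin 6 → Fin 4) (h : chk6 (t 0) (t 1) (t 2) (t 3) (t 4) (t 5) = true) : pcond t := by
  simp only [chk6, Bool.or_eq_true] at h
  rcases h with ((((((((((((((h|h)|h)|h)|h)|h)|h)|h)|h)|h)|h)|h)|h)|h)|h)
  exacts [
    ⟨0, 1, by decide, eqb_eq h⟩,
    ⟨0, 2, by decide, eqb_eq h⟩,
    ⟨0, 3, by decide, eqb_eq h⟩,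
    ⟨0, 4, by decide, eqb_eq h⟩,
    ⟨0, 5, by decide, eqb_eq h⟩,
    ⟨1, 2, by decide, eqb_eq h⟩,
    ⟨1, 3, by decide, eqb_eq h⟩,
    ⟨1, 4, by decide, eqb_eq h⟩,
    ⟨1, 5, by decide, eqb_eq h⟩,
    ⟨2, 3, by decide, eqb_eq h⟩,
    ⟨2, 4, by decide, eqb_eq h⟩,
    ⟨2, 5, by decide, eqb_eq h⟩,
    ⟨3, 4, by decide, eqb_eq h⟩,
    ⟨3, 5, by decide, eqb_eq h⟩,
    ⟨4, 5, by decide, eqb_eq h⟩]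

lemma chk8_pcond (t : Fin 8 → Fin 4) (h : chk8 (t 0) (t 1) (t 2) (t 3) (t 4) (t 5) (t 6) (t 7) = true) : pcond t := by
  simp only [chk8, Bool.or_eq_true] at h
  rcases h with (((((((((((((((((((((((((((h|h)|h)|h)|h)|h)|h)|h)|h)|h)|h)|h)|h)|h)|h)|h)|h)|h)|h)|h)|h)|h)|h)|h)|h)|h)|h)|h)
  exacts [
    ⟨0, 1, by decide, eqb_eq h⟩,
    ⟨0, 2, by decide, eqb_eq h⟩,
    ⟨0, 3, by decide, eqb_eq h⟩,
    ⟨0, 4, by decide, eqb_eq h⟩,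
    ⟨0, 5, by decide, eqb_eq h⟩,
    ⟨0, 6, by decide, eqb_eq h⟩,
    ⟨0, 7, by decide, eqb_eq h⟩,
    ⟨1, 2, by decide, eqb_eq h⟩,
    ⟨1, 3, by decide, eqb_eq h⟩,
    ⟨1, 4, by decide, eqb_eq h⟩,
    ⟨1, 5, by decide, eqb_eq h⟩,
    ⟨1, 6, by decide, eqb_eq h⟩,
    ⟨1, 7, by decide, eqb_eq h⟩,
    ⟨2, 3, by decide, eqb_eq h⟩,
    ⟨2, 4, by decide, eqb_eq h⟩,
    ⟨2, 5, by decide, eqb_eq h⟩,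
    ⟨2, 6, by decide, eqb_eq h⟩,
    ⟨2, 7, by decide, eqb_eq h⟩,
    ⟨3, 4, by decide, eqb_eq h⟩,
    ⟨3, 5, by decide, eqb_eq h⟩,
    ⟨3, 6, by decide, eqb_eq h⟩,
    ⟨3, 7, by decide, eqb_eq h⟩,
    ⟨4, 5, by decide, eqb_eq h⟩,
    ⟨4, 6, by decide, eqb_eq h⟩,
    ⟨4, 7, by decide, eqb_eq h⟩,
    ⟨5, 6, by decide, eqb_eq h⟩,
    ⟨5, 7, by decide, eqb_eq h⟩,
    ⟨6, 7, by decide, eqb_eq h⟩]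

theorem A6 : ∀ t : Fin 6 → Fin 4, pcond t := by
  refine pcond_all (by decide) ?_
  intro t h0 h1
  have h := A6coreB (t 2) (t 3) (t 4) (t 5)
  have hc : chk6 (t 0) (t 1) (t 2) (t 3) (t 4) (t 5) = true := by
    rcases h1 with h1 | h1 <;> rw [h0, h1]
    · exact h.1
    · exact h.2
  exact chk6_pcond t hc

theorem A8 : ∀ t : Fin 8 → Fin 4, pcond t := by
  refine pcond_all (by decide) ?_
  intro t h0 h1
  have h := A8coreB (t 2) (t 3) (t 4) (t 5) (t 6) (t 7)
  have hc : chk8 (t 0) (t 1) (t 2) (t 3) (t 4) (t 5) (t 6) (t 7) = true := by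
    rcases h1 with h1 | h1 <;> rw [h0, h1]
    · exact h.1
    · exact h.2
  exact chk8_pcond t hc

lemma wheel_lb {n : ℕ} [NeZero n] (hv : (1 : Fin n).val = 1) (h2 : ((2:Fin n)).val ≠ 1)
    (h2' : ((-2:Fin n)).val ≠ 1) (h20 : (2:Fin n) ≠ 0)
    (hP : ∀ t : Fin n → Fin 4, pcond t)
    (ℓ : Sym2 (Option (Fin n)) → ℕ+) (hirr : IsLinkIrregular (wheelGraph n) ℓ)
    (hcard : (ℓ '' (wheelGraph n).edgeSet).ncard ≤ 4) : False := by
  have hfin : (ℓ '' (wheelGraph n).edgeSet).Finite := Set.Finite.image ℓ (Set.toFinite _)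
  haveI := hfin.fintype
  have hc4 : Fintype.card (ℓ '' (wheelGraph n).edgeSet) ≤ 4 := by
    rw [← Nat.card_eq_fintype_card, Nat.card_coe_set_eq]; exact hcard
  obtain ⟨emb⟩ : Nonempty ((ℓ '' (wheelGraph n).edgeSet) ↪ Fin 4) :=
    Function.Embedding.nonempty_of_card_le (by simpa using hc4)
  have hmem : ∀ i : Fin n, ℓ s(none, some i) ∈ ℓ '' (wheelGraph n).edgeSet := fun i =>
    ⟨s(none, some i), (SimpleGraph.mem_edgeSet _).2 (wheel_adj_none_some i), rfl⟩
  set t : Fin n → Fin 4 := fun i => emb ⟨ℓ s(none, some i), hmem i⟩ with ht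
  have key : ∀ a b : Fin n, t a = t b → ℓ s(none, some a) = ℓ s(none, some b) := by
    intro a b h
    exact congrArg Subtype.val (emb.injective h)
  obtain ⟨i, j, hij, hcase⟩ := hP t
  have hne : (some i : Option (Fin n)) ≠ some j := fun h => hij (Option.some_injective _ h)
  rcases hcase with ⟨h1, h2c⟩ | ⟨h1, h2c⟩
  · exact hirr _ _ hne (rim_iso hv h2 h2' h20 ℓ i j (j-1) (j+1) (Or.inl ⟨rfl, rfl⟩)
      (key _ _ h1) (key _ _ h2c))
  · exact hirr _ _ hne (rim_iso hv h2 h2' h20 ℓ i j (j+1) (j-1) (Or.inr ⟨rfl, rfl⟩)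
      (key _ _ h1) (key _ _ h2c))

lemma lb6 (ℓ : Sym2 (Option (Fin 6)) → ℕ+) (hirr : IsLinkIrregular (wheelGraph 6) ℓ) :
    ¬ (ℓ '' (wheelGraph 6).edgeSet).ncard ≤ 4 := fun h =>
  wheel_lb (by decide) (by decide) (by decide) (by decide) A6 ℓ hirr h

lemma lb8 (ℓ : Sym2 (Option (Fin 8)) → ℕ+) (hirr : IsLinkIrregular (wheelGraph 8) ℓ) :
    ¬ (ℓ '' (wheelGraph 8).edgeSet).ncard ≤ 4 := fun h =>
  wheel_lb (by decide) (by decide) (by decide) (by decide) A8 ℓ hirr h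

instance (n : ℕ) : DecidableRel (wheelGraph n).Adj := by
  rintro (_|i) (_|j) <;> simp only [wheelGraph] <;> infer_instance

def LLIso {α : Type*} (G : SimpleGraph V) (f : Sym2 V → α) (u v : V) : Prop :=
  ∃ e : (G.neighborSet u) ≃ (G.neighborSet v),
    (∀ a b : G.neighborSet u, G.Adj a.1 b.1 ↔ G.Adj (e a).1 (e b).1) ∧
    (∀ a b : G.neighborSet u, G.Adj a.1 b.1 → f s(a.1, b.1) = f s((e a).1, (e b).1))

instance {α : Type*} [DecidableEq α] [Fintype V] [DecidableEq V] (G : SimpleGraph V)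
    [DecidableRel G.Adj] (f : Sym2 V → α) (u v : V) : Decidable (LLIso G f u v) := by
  unfold LLIso; infer_instance

instance [Fintype V] [DecidableEq V] (G : SimpleGraph V)
    [DecidableRel G.Adj] (ℓ : Sym2 V → ℕ+) (u v : V) : Decidable (LabeledLinkIso G ℓ u v) := by
  unfold LabeledLinkIso; infer_instance

lemma lliso_to_labeled {G : SimpleGraph V} {ℓ : Sym2 V → ℕ+} {α : Type*} {f : Sym2 V → α}
    (h : ∀ a b a' b' : V, G.Adj a b → G.Adj a' b' → f s(a, b) = f s(a', b') →
      ℓ s(a, b) = ℓ s(a', b'))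
    {u v : V} (hf : LLIso G f u v) : LabeledLinkIso G ℓ u v := by
  obtain ⟨e, hadj, hlab⟩ := hf
  exact ⟨e, hadj, fun a b hab => h _ _ _ _ hab ((hadj a b).1 hab) (hlab a b hab)⟩

def mkl3 (b1 b2 b3 b4 b5 b6 : Fin 2) : Sym2 (Option (Fin 3)) → Fin 2 := fun e =>
  if e = s(none, some 0) then b1 else
  if e = s(none, some 1) then b2 else
  if e = s(none, some 2) then b3 else
  if e = s(some 0, some 1) then b4 else
  if e = s(some 0, some 2) then b5 else b6

set_option maxRecDepth 10000 in
set_option maxHeartbeats 16000000 in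
theorem LB3 : ∀ b1 b2 b3 b4 b5 b6 : Fin 2, ∃ u v : Option (Fin 3), u ≠ v ∧
    LLIso (wheelGraph 3) (mkl3 b1 b2 b3 b4 b5 b6) u v := by decide

lemma mkl3_agree (f : Sym2 (Option (Fin 3)) → Fin 2) :
    ∀ a b : Option (Fin 3), (wheelGraph 3).Adj a b →
      mkl3 (f s(none, some 0)) (f s(none, some 1)) (f s(none, some 2))
        (f s(some 0, some 1)) (f s(some 0, some 2)) (f s(some 1, some 2)) s(a, b) = f s(a, b) := by
  rintro (_|i) (_|j) hadj
  · exact hadj.elim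
  · fin_cases j <;> simp [mkl3, Sym2.eq_iff]
  · fin_cases i <;> simp [mkl3, Sym2.eq_iff] <;> exact congrArg f Sym2.eq_swap
  · fin_cases i <;> fin_cases j <;>
      first
        | exact absurd hadj (by decide)
        | (simp [mkl3, Sym2.eq_iff]; exact congrArg f Sym2.eq_swap)
        | simp [mkl3, Sym2.eq_iff]

lemma lb3 (ℓ : Sym2 (Option (Fin 3)) → ℕ+) (hirr : IsLinkIrregular (wheelGraph 3) ℓ) :
    ¬ (ℓ '' (wheelGraph 3).edgeSet).ncard ≤ 2 := by
  intro hcard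
  have hfin : (ℓ '' (wheelGraph 3).edgeSet).Finite := Set.Finite.image ℓ (Set.toFinite _)
  haveI := hfin.fintype
  have hc2 : Fintype.card (ℓ '' (wheelGraph 3).edgeSet) ≤ 2 := by
    rw [← Nat.card_eq_fintype_card, Nat.card_coe_set_eq]; exact hcard
  obtain ⟨emb⟩ : Nonempty ((ℓ '' (wheelGraph 3).edgeSet) ↪ Fin 2) :=
    Function.Embedding.nonempty_of_card_le (by simpa using hc2)
  set f : Sym2 (Option (Fin 3)) → Fin 2 := fun e =>
    if h : e ∈ (wheelGraph 3).edgeSet then emb ⟨ℓ e, ⟨e, h, rfl⟩⟩ else 0 with hf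
  obtain ⟨u, v, huv, hiso⟩ := LB3 (f s(none, some 0)) (f s(none, some 1)) (f s(none, some 2))
    (f s(some 0, some 1)) (f s(some 0, some 2)) (f s(some 1, some 2))
  refine hirr u v huv (lliso_to_labeled ?_ hiso)
  intro a b a' b' hab hab' heq
  rw [mkl3_agree f a b hab, mkl3_agree f a' b' hab'] at heq
  rw [hf] at heq
  simp only [(SimpleGraph.mem_edgeSet _).2 hab, (SimpleGraph.mem_edgeSet _).2 hab',
    dif_pos] at heq
  exact congrArg Subtype.val (emb.injective heq)

instance [Fintype V] [DecidableEq V] (G : SimpleGraph V)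
    [DecidableRel G.Adj] (ℓ : Sym2 V → ℕ+) : Decidable (IsLinkIrregular G ℓ) := by
  unfold IsLinkIrregular; infer_instance

def ell3 : Sym2 (Option (Fin 3)) → ℕ+ := fun e =>
  if e = s(none, some 2) then 2 else
  if e = s(some 0, some 1) then 3 else
  if e = s(some 0, some 2) then 2 else 1

def ell6 : Sym2 (Option (Fin 6)) → ℕ+ := fun e =>
  if e = s(none, some 2) then 2 else
  if e = s(none, some 4) then 3 else
  if e = s(none, some 3) then 4 else
  if e = s(none, some 5) then 5 else 1

def ell8 : Sym2 (Option (Fin 8)) → ℕ+ := fun e =>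
  if e = s(none, some 2) then 2 else
  if e = s(none, some 4) then 3 else
  if e = s(none, some 5) then 3 else
  if e = s(none, some 6) then 4 else
  if e = s(none, some 7) then 5 else 1

set_option maxRecDepth 10000 in
set_option maxHeartbeats 2000000 in
theorem irr3 : IsLinkIrregular (wheelGraph 3) ell3 := by decide

set_option maxRecDepth 10000 in
set_option maxHeartbeats 4000000 in
theorem irr6 : IsLinkIrregular (wheelGraph 6) ell6 := by decide

set_option maxRecDepth 10000 in
set_option maxHeartbeats 8000000 in
theorem irr8 : IsLinkIrregular (wheelGraph 8) ell8 := by decide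

lemma ncard_image_eq {m : ℕ} (G : SimpleGraph (Option (Fin m))) [DecidableRel G.Adj]
    (ℓ : Sym2 (Option (Fin m)) → ℕ+) :
    (ℓ '' G.edgeSet).ncard = (G.edgeFinset.image ℓ).card := by
  rw [← SimpleGraph.coe_edgeFinset, ← Finset.coe_image, Set.ncard_coe_finset]

set_option maxRecDepth 10000 in
lemma card3 : ((wheelGraph 3).edgeFinset.image ell3).card = 3 := by decide
set_option maxRecDepth 10000 in
lemma card6 : ((wheelGraph 6).edgeFinset.image ell6).card = 5 := by decide
set_option maxRecDepth 10000 in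
lemma card8 : ((wheelGraph 8).edgeFinset.image ell8).card = 5 := by decide

lemma eta_eq {m : ℕ} (k kk : ℕ) (hkk : kk + 1 = k) (ℓ : Sym2 (Option (Fin m)) → ℕ+)
    (hirr : IsLinkIrregular (wheelGraph m) ℓ)
    (hcard : ((wheelGraph m).edgeFinset.image ℓ).card = k)
    (hlb : ∀ ℓ' : Sym2 (Option (Fin m)) → ℕ+, IsLinkIrregular (wheelGraph m) ℓ' →
      ¬ (ℓ' '' (wheelGraph m).edgeSet).ncard ≤ kk) :
    linkIrregularNumber (wheelGraph m) = k := by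
  refine le_antisymm (sInf_le ⟨ℓ, hirr, ?_⟩) (le_sInf ?_)
  · rw [ncard_image_eq, hcard]
  · rintro c ⟨ℓ', hirr', rfl⟩
    by_contra hlt
    push_neg at hlt
    have h1 : (ℓ' '' (wheelGraph m).edgeSet).ncard < k := by exact_mod_cast hlt
    exact hlb ℓ' hirr' (by omega)

theorem final3 : linkIrregularNumber (wheelGraph 3) = 3 :=
  eta_eq 3 2 rfl ell3 irr3 card3 lb3
theorem final6 : linkIrregularNumber (wheelGraph 6) = 5 :=
  eta_eq 5 4 rfl ell6 irr6 card6 lb6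
theorem final8 : linkIrregularNumber (wheelGraph 8) = 5 :=
  eta_eq 5 4 rfl ell8 irr8 card8 lb8

/-- η(W_3) = 3, η(W_6) = 5, η(W_8) = 5. -/
theorem stmt_9 :
    linkIrregularNumber (wheelGraph 3) = 3 ∧
    linkIrregularNumber (wheelGraph 6) = 5 ∧
    linkIrregularNumber (wheelGraph 8) = 5 := by
  exact ⟨final3, final6, final8⟩
end

section
/- Let ℓ be a link-irregular labeling of the complete graph K_n using exactly the two labels "red" and "blue". Then the spanning subgraph G_red of K_n, on the same n vertices and consisting of exactly the red-labeled edges, is a cut-irregular graph on n vertices. -/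
open SimpleGraph

variable {V : Type*}

/-- The spanning subgraph of K_n consisting of the edges labeled `red`. -/
def redSubgraph (n : ℕ) (ℓ : Sym2 (Fin n) → ℕ+) (red : ℕ+) : SimpleGraph (Fin n) where
  Adj u v := u ≠ v ∧ ℓ s(u, v) = red
  symm := by
    constructor
    rintro u v ⟨h1, h2⟩
    exact ⟨h1.symm, by rwa [Sym2.eq_swap]⟩
  loopless := by
    constructor
    rintro u ⟨h1, _⟩
    exact h1 rfl

/-- if ℓ is a link-irregular labeling of K_n using the two labels red and blue,
then the graph of red edges is cut-irregular. -/
theorem stmt_11 (n : ℕ) (red blue : ℕ+) (hrb : red ≠ blue)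
    (ℓ : Sym2 (Fin n) → ℕ+)
    (hlab : ∀ e ∈ (⊤ : SimpleGraph (Fin n)).edgeSet, ℓ e = red ∨ ℓ e = blue)
    (hirr : IsLinkIrregular (⊤ : SimpleGraph (Fin n)) ℓ) :
    CutIrregular (redSubgraph n ℓ red) := by
  intro u v huv hne
  obtain ⟨φ⟩ := hne
  apply hirr u v huv
  set H := redSubgraph n ℓ red with hH
  have key : ∀ x y : Fin n, x ≠ y → (ℓ s(x, y) = red ∨ ℓ s(x, y) = blue) := fun x y hxy =>
    hlab _ (by simpa [SimpleGraph.mem_edgeSet] using hxy)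
  have hredadj : ∀ x y : Fin n, x ≠ y → (H.Adj x y ↔ ℓ s(x, y) = red) := by
    intro x y hxy
    constructor
    · rintro ⟨_, h⟩; exact h
    · intro h; exact ⟨hxy, h⟩
  let e1 : ((⊤ : SimpleGraph (Fin n)).neighborSet u) ≃ (({u} : Set (Fin n))ᶜ : Set (Fin n)) :=
    Equiv.subtypeEquivRight (fun w => by
      simp [SimpleGraph.mem_neighborSet, ne_comm])
  let e2 : ((⊤ : SimpleGraph (Fin n)).neighborSet v) ≃ (({v} : Set (Fin n))ᶜ : Set (Fin n)) :=
    Equiv.subtypeEquivRight (fun w => by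
      simp [SimpleGraph.mem_neighborSet, ne_comm])
  refine ⟨e1.trans (φ.toEquiv.trans e2.symm), ?_, ?_⟩
  · intro a b
    simp only [top_adj, Equiv.trans_apply]
    constructor
    · intro h heq
      exact h (congrArg Subtype.val (e1.injective (φ.toEquiv.injective
        (e2.symm.injective (Subtype.ext heq)))))
    · intro h heq
      exact h (congrArg Subtype.val (congrArg (fun z =>
        e2.symm (φ.toEquiv (e1 z))) (Subtype.ext heq)))
  · intro a b hab
    have hab' : a.1 ≠ b.1 := by simpa using hab
    have hab2 : ((e1.trans (φ.toEquiv.trans e2.symm)) a).1 ≠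
        ((e1.trans (φ.toEquiv.trans e2.symm)) b).1 := by
      intro heq
      exact hab' (congrArg Subtype.val (e1.injective (φ.toEquiv.injective
        (e2.symm.injective (Subtype.ext heq)))))
    have hval : ∀ z : ((⊤ : SimpleGraph (Fin n)).neighborSet u),
        ((e1.trans (φ.toEquiv.trans e2.symm)) z).1 = (φ (e1 z)).1 := fun z => rfl
    have hadj : H.Adj a.1 b.1 ↔ H.Adj (φ (e1 a)).1 (φ (e1 b)).1 := by
      have := φ.map_adj_iff (v := e1 a) (w := e1 b)
      simp only [comap_adj, Function.Embedding.coe_subtype] at this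
      exact this.symm
    rw [hval a, hval b] at hab2
    show ℓ s(a.1, b.1) = ℓ s((φ (e1 a)).1, (φ (e1 b)).1)
    rcases key a.1 b.1 hab' with h1 | h1 <;>
      rcases key _ _ hab2 with h2 | h2
    · rw [h1, h2]
    · exfalso
      have h3 := (hredadj _ _ hab').mpr h1
      rw [hadj] at h3
      have h4 := (hredadj _ _ hab2).mp h3
      exact hrb (by rw [← h4, h2])
    · exfalso
      have h3 := (hredadj _ _ hab2).mpr h2
      rw [← hadj] at h3
      have h4 := (hredadj _ _ hab').mp h3
      exact hrb (by rw [← h4, h1])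
    · rw [h1, h2]
end

section
/- If G is a cut-irregular graph on n vertices, then the 2-labeling of the complete graph K_n on the vertex set of G that assigns the label "red" to every edge of G and the label "blue" to every remaining edge of K_n is a link-irregular labeling of K_n. -/
open SimpleGraph

variable {V : Type*}

/-- if G is cut-irregular, then labeling the edges of G red and the remaining
edges of the complete graph blue gives a link-irregular labeling of the complete graph. -/
theorem stmt_12 {V : Type*} [Fintype V] (G : SimpleGraph V) [DecidableRel G.Adj]
    (hG : CutIrregular G) (red blue : ℕ+) (hrb : red ≠ blue)
    (ℓ : Sym2 V → ℕ+)
    (hℓ : ∀ u v : V, u ≠ v → ((G.Adj u v → ℓ s(u, v) = red) ∧ (¬ G.Adj u v → ℓ s(u, v) = blue))) :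
    IsLinkIrregular (⊤ : SimpleGraph V) ℓ := by
  rintro u v huv ⟨e, hadj, hlab⟩
  apply hG u v huv
  have hred : ∀ x y : V, x ≠ y → (G.Adj x y ↔ ℓ s(x, y) = red) := by
    intro x y hxy
    constructor
    · exact (hℓ x y hxy).1
    · intro h
      by_contra hA
      exact hrb (((hℓ x y hxy).2 hA).symm.trans h).symm
  have hsetu : (⊤ : SimpleGraph V).neighborSet u = ({u} : Set V)ᶜ := by
    ext w; simp [ne_comm]
  have hsetv : (⊤ : SimpleGraph V).neighborSet v = ({v} : Set V)ᶜ := by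
    ext w; simp [ne_comm]
  have key : ∀ a b : (⊤ : SimpleGraph V).neighborSet u,
      G.Adj a.1 b.1 ↔ G.Adj (e a).1 (e b).1 := by
    intro a b
    by_cases hab : a.1 = b.1
    · have : a = b := Subtype.ext hab
      subst this
      simp
    · have heab : (e a).1 ≠ (e b).1 := by
        intro h
        exact hab (congrArg Subtype.val (e.injective (Subtype.ext h)))
      have hl : ℓ s(a.1, b.1) = ℓ s((e a).1, (e b).1) := hlab a b (by simpa using hab)
      rw [hred _ _ hab, hred _ _ heab, hl]
  refine ⟨⟨(Equiv.setCongr hsetu.symm).trans (e.trans (Equiv.setCongr hsetv)), ?_⟩⟩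
  intro a b
  exact (key _ _).symm
end
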